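/- Let q : 𝕋 → ℝ be a C² function on the circle 𝕋 = [−1/2,1/2] (endpoints identified) with finitely many zeros y₁ < ⋯ < y_N, all in the open interval, each being a sign change (q changes sign at each y_i), and q(±1/2) ≠ 0. Then ∫_𝕋 (q/|q|)(y) q''(y) dy = −2 Σ_{i=1}^{N} |q'(y_i)|, where the integrand is defined away from the zeros. -/

import Mathlib

open MeasureTheory

lemma aux_sgn (x : ℝ) (hx : 0 < x ∨ x < 0) : x / |x| = if 0 < x then 1 else -1 := by
  rcases hx with h | h
  · rw [if_pos h, abs_of_pos h, div_self h.ne']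
  · rw [if_neg (by linarith), abs_of_neg h]
    rw [div_neg, div_self h.ne]

lemma aux_samesign (q : ℝ → ℝ) (hc : Continuous q) (u v : ℝ)
    (h : ∀ y ∈ Set.uIcc u v, q y ≠ 0) : q u / |q u| = q v / |q v| := by
  have hu := h u Set.left_mem_uIcc
  have hv := h v Set.right_mem_uIcc
  have hprod : 0 < q u * q v := by
    rcases lt_trichotomy (q u * q v) 0 with hlt | he | hgt
    · exfalso
      have h0 : (0:ℝ) ∈ Set.uIcc (q u) (q v) := by
        rcases mul_neg_iff.mp hlt with ⟨h1, h2⟩ | ⟨h1, h2⟩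
        · exact Set.mem_uIcc.mpr (Or.inr ⟨h2.le, h1.le⟩)
        · exact Set.mem_uIcc.mpr (Or.inl ⟨h1.le, h2.le⟩)
      obtain ⟨c, hc1, hc2⟩ := intermediate_value_uIcc hc.continuousOn h0
      exact h c hc1 hc2
    · exact absurd (mul_eq_zero.mp he) (by push_neg; exact ⟨hu, hv⟩)
    · exact hgt
  rcases lt_or_gt_of_ne hu with h1 | h1
  · have h2 : q v < 0 := by nlinarith
    rw [abs_of_neg h1, abs_of_neg h2]; field_simp
  · have h2 : 0 < q v := by nlinarith
    rw [abs_of_pos h1, abs_of_pos h2, div_self h1.ne', div_self h2.ne']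

/-- Partition points: `zz 0 = -1/2`, `zz k = Y (k-1)` for `1 ≤ k ≤ N`, `zz (N+1) = 1/2`. -/
noncomputable def zz (N : ℕ) (Y : Fin N → ℝ) (k : ℕ) : ℝ :=
  if hk : 1 ≤ k ∧ k ≤ N then Y ⟨k - 1, by omega⟩ else if k = 0 then -(1:ℝ)/2 else 1/2

lemma zz_zero (N : ℕ) (Y : Fin N → ℝ) : zz N Y 0 = -(1:ℝ)/2 := by
  unfold zz; rw [dif_neg (by omega), if_pos rfl]

lemma zz_last (N : ℕ) (Y : Fin N → ℝ) : zz N Y (N+1) = 1/2 := by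
  unfold zz; rw [dif_neg (by omega), if_neg (by omega)]

lemma zz_mid (N : ℕ) (Y : Fin N → ℝ) (k : ℕ) (h1 : 1 ≤ k) (h2 : k ≤ N) :
    zz N Y k = Y ⟨k - 1, by omega⟩ := by
  unfold zz; rw [dif_pos ⟨h1, h2⟩]

/-- Integrating the sign of a C² periodic function against its second derivative
over the circle: if `q` has finitely many zeros, all simple sign changes in the
interior, then `∫ (q/|q|) q'' = -2 Σ |q'(yᵢ)|`. -/
theorem stmt_11 (q : ℝ → ℝ) (hper : ∀ y : ℝ, q (y + 1) = q y)
    (hq : ContDiff ℝ 2 q)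
    (N : ℕ) (Y : Fin N → ℝ) (hmonoY : StrictMono Y)
    (hY : ∀ i, Y i ∈ Set.Ioo (-(1 : ℝ) / 2) (1 / 2))
    (hzeros : ∀ y ∈ Set.Icc (-(1 : ℝ) / 2) (1 / 2), (q y = 0 ↔ ∃ i, Y i = y))
    (hsign : ∀ i, ∃ δ > 0, ∀ a b : ℝ,
      Y i - δ < a → a < Y i → Y i < b → b < Y i + δ → q a * q b < 0) :
    ∫ y in Set.Icc (-(1 : ℝ) / 2) (1 / 2), (q y / |q y|) * deriv (deriv q) y =
      -2 * ∑ i, |deriv q (Y i)| := by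
  have hqc : Continuous q := hq.continuous
  have hqd : Differentiable ℝ q := hq.differentiable (by norm_num)
  have hq1 : ContDiff ℝ 1 (deriv q) := by
    have : ContDiff ℝ (1 + 1 : ℕ) q := by exact_mod_cast hq
    exact ((contDiff_succ_iff_deriv).mp (by exact_mod_cast this)).2.2
  have hDd : Differentiable ℝ (deriv q) := hq1.differentiable one_ne_zero
  have hD2c : Continuous (deriv (deriv q)) := hq1.continuous_deriv le_rfl
  -- periodicity of the derivative
  have hperD : deriv q (1/2 : ℝ) = deriv q (-(1:ℝ)/2) := by
    have e : (fun x => q (x + 1)) = q := funext hper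
    have h1 : deriv (fun x => q (x + 1)) (-(1:ℝ)/2) = deriv q (-(1:ℝ)/2 + 1) :=
      deriv_comp_add_const q 1 (-(1:ℝ)/2)
    rw [e] at h1
    have h2 : (-(1:ℝ)/2 + 1) = 1/2 := by norm_num
    rw [h2] at h1
    exact h1.symm
  have hqB : q (1/2 : ℝ) = q (-(1:ℝ)/2) := by
    have := hper (-(1:ℝ)/2)
    norm_num at this ⊢
    convert this using 2
  set z : ℕ → ℝ := zz N Y with hz_def
  have hz0 : z 0 = -(1:ℝ)/2 := zz_zero N Y
  have hzlast : z (N+1) = 1/2 := zz_last N Y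
  have hzmid : ∀ k (h1 : 1 ≤ k) (h2 : k ≤ N), z k = Y ⟨k - 1, by omega⟩ :=
    fun k h1 h2 => zz_mid N Y k h1 h2
  have hstep : ∀ k ≤ N, z k < z (k+1) := by
    intro k hk
    rcases Nat.eq_zero_or_pos k with rfl | hk1
    · rcases Nat.eq_zero_or_pos N with rfl | hN
      · rw [hz0, hzlast]; norm_num
      · rw [hz0, hzmid 1 le_rfl hN]; exact (hY _).1
    · rw [hzmid k hk1 hk]
      rcases eq_or_lt_of_le hk with rfl | hlt
      · rw [hzlast]; exact (hY _).2
      · rw [hzmid (k+1) (by omega) (by omega)]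
        exact hmonoY (by simp only [Fin.mk_lt_mk]; omega)
  have hmono : ∀ k ≤ N + 1, ∀ j ≤ k, z j ≤ z k := by
    intro k
    induction k with
    | zero =>
      intro _ j hj
      have hj0 : j = 0 := by omega
      subst hj0; exact le_rfl
    | succ n ih =>
      intro hk j hj
      rcases Nat.lt_or_ge j (n+1) with h | h
      · exact le_trans (ih (by omega) j (by omega)) (hstep n (by omega)).le
      · have : j = n + 1 := by omega
        subst this; exact le_rfl
  have hzA : ∀ k ≤ N + 1, -(1:ℝ)/2 ≤ z k := by
    intro k hk; rw [← hz0]; exact hmono k hk 0 (by omega)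
  have hzB : ∀ k ≤ N + 1, z k ≤ 1/2 := by
    intro k hk; rw [← hzlast]; exact hmono (N+1) le_rfl k hk
  -- endpoints are not zeros
  have hqA0 : q (-(1:ℝ)/2) ≠ 0 := by
    intro h
    obtain ⟨i, hi⟩ := (hzeros _ ⟨le_rfl, by norm_num⟩).mp h
    exact absurd (hi ▸ (hY i).1) (by norm_num)
  have hqB0 : q (1/2 : ℝ) ≠ 0 := by rw [hqB]; exact hqA0
  -- q does not vanish strictly between partition points
  have hne : ∀ k ≤ N, ∀ y ∈ Set.Ioo (z k) (z (k+1)), q y ≠ 0 := by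
    intro k hk y hy hqy
    have hyI : y ∈ Set.Icc (-(1:ℝ)/2) (1/2) :=
      ⟨le_trans (hzA k (by omega)) hy.1.le, le_trans hy.2.le (hzB (k+1) (by omega))⟩
    obtain ⟨i, hi⟩ := (hzeros y hyI).mp hqy
    have h1 : z k < Y i := hi ▸ hy.1
    have h2 : Y i < z (k+1) := hi ▸ hy.2
    have hup : i.val < k := by
      rcases Nat.lt_or_ge k N with h | h
      · rw [hzmid (k+1) (by omega) (by omega)] at h2
        have := hmonoY.lt_iff_lt.mp h2
        simp only [Fin.lt_def] at this; omega
      · have := i.isLt; omega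
    have hlow : k ≤ i.val := by
      rcases Nat.eq_zero_or_pos k with rfl | hk1
      · omega
      · rw [hzmid k hk1 hk] at h1
        have := hmonoY.lt_iff_lt.mp h1
        simp only [Fin.lt_def] at this; omega
    omega
  -- the sign on each interval
  set s : ℕ → ℝ := fun k => q ((z k + z (k+1))/2) / |q ((z k + z (k+1))/2)| with hs_def
  have hm_mem : ∀ k ≤ N, (z k + z (k+1))/2 ∈ Set.Ioo (z k) (z (k+1)) := by
    intro k hk
    have := hstep k hk
    constructor <;> [skip; skip] <;> · show _ < _; linarith
  have hsk : ∀ k, s k = q ((z k + z (k+1))/2) / |q ((z k + z (k+1))/2)| := fun k => rfl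
  have hsgn_eq : ∀ k ≤ N, ∀ y ∈ Set.Ioo (z k) (z (k+1)), q y / |q y| = s k := by
    intro k hk y hy
    rw [hsk]
    apply aux_samesign q hqc
    intro t ht
    exact hne k hk t (Set.ordConnected_Ioo.uIcc_subset hy (hm_mem k hk) ht)
  have hs_pm : ∀ k ≤ N, s k = 1 ∨ s k = -1 := by
    intro k hk
    have h := hne k hk _ (hm_mem k hk)
    rw [hsk, aux_sgn _ (h.lt_or_gt.symm.imp id id)]
    split
    · exact Or.inl rfl
    · exact Or.inr rfl
  -- sign alternation across each zero
  have halt : ∀ k < N, s (k+1) = -s k := by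
    intro k hk
    obtain ⟨δ, hδ, hδ'⟩ := hsign ⟨k, hk⟩
    have hzY : z (k+1) = Y ⟨k, hk⟩ := hzmid (k+1) (by omega) (by omega)
    set a := (max (z k) (z (k+1) - δ) + z (k+1))/2 with ha_def
    set b := (z (k+1) + min (z (k+2)) (z (k+1) + δ))/2 with hb_def
    have hmax : max (z k) (z (k+1) - δ) < z (k+1) :=
      max_lt (hstep k (by omega)) (by linarith)
    have hmin : z (k+1) < min (z (k+2)) (z (k+1) + δ) :=
      lt_min (hstep (k+1) (by omega)) (by linarith)
    have ha1 : z k < a := by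
      have := le_max_left (z k) (z (k+1) - δ); rw [ha_def]; linarith
    have ha2 : a < z (k+1) := by rw [ha_def]; linarith
    have ha3 : z (k+1) - δ < a := by
      have := le_max_right (z k) (z (k+1) - δ); rw [ha_def]; linarith
    have hb1 : z (k+1) < b := by rw [hb_def]; linarith
    have hb2 : b < z (k+2) := by
      have := min_le_left (z (k+2)) (z (k+1) + δ); rw [hb_def]; linarith
    have hb3 : b < z (k+1) + δ := by
      have := min_le_right (z (k+2)) (z (k+1) + δ); rw [hb_def]; linarith
    have hprod : q a * q b < 0 := by
      apply hδ' a b <;> rw [← hzY] <;> assumption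
    have hqa : q a / |q a| = s k := hsgn_eq k (by omega) a ⟨ha1, ha2⟩
    have hqb : q b / |q b| = s (k+1) := hsgn_eq (k+1) (by omega) b ⟨hb1, hb2⟩
    have hqa0 : q a ≠ 0 := hne k (by omega) a ⟨ha1, ha2⟩
    have hqb0 : q b ≠ 0 := hne (k+1) (by omega) b ⟨hb1, hb2⟩
    have hqa' : q a = s k * |q a| := by
      rw [← hqa, div_mul_cancel₀]
      exact abs_ne_zero.mpr hqa0
    have hqb' : q b = s (k+1) * |q b| := by
      rw [← hqb, div_mul_cancel₀]
      exact abs_ne_zero.mpr hqb0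
    have habs : 0 < |q a| * |q b| := mul_pos (abs_pos.mpr hqa0) (abs_pos.mpr hqb0)
    have hss : s k * s (k+1) < 0 := by
      rw [hqa', hqb'] at hprod
      nlinarith
    rcases hs_pm k (by omega) with h1 | h1 <;> rcases hs_pm (k+1) (by omega) with h2 | h2 <;>
      rw [h1, h2] at hss ⊢ <;> linarith
  -- the sign times the slope at each zero
  have hF : ∀ k, 1 ≤ k → k ≤ N → s k * deriv q (z k) = |deriv q (z k)| := by
    intro k h1 h2
    have hzk0 : q (z k) = 0 := by
      apply (hzeros (z k) ⟨hzA k (by omega), hzB k (by omega)⟩).mpr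
      exact ⟨⟨k - 1, by omega⟩, (hzmid k h1 h2).symm⟩
    have hd : HasDerivAt q (deriv q (z k)) (z k) := (hqd (z k)).hasDerivAt
    have hslope : Filter.Tendsto (slope q (z k)) (nhdsWithin (z k) {z k}ᶜ)
        (nhds (deriv q (z k))) := hasDerivAt_iff_tendsto_slope.mp hd
    have hslope' : Filter.Tendsto (fun y => s k * slope q (z k) y)
        (nhdsWithin (z k) (Set.Ioi (z k))) (nhds (s k * deriv q (z k))) := by
      apply Filter.Tendsto.const_mul
      apply hslope.mono_left
      apply nhdsWithin_mono
      intro y hy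
      exact Set.mem_compl_singleton_iff.mpr (ne_of_gt hy)
    have hnonneg : ∀ᶠ y in nhdsWithin (z k) (Set.Ioi (z k)),
        0 ≤ s k * slope q (z k) y := by
      filter_upwards [Ioo_mem_nhdsGT_of_mem (Set.mem_Ico.mpr ⟨le_rfl, hstep k h2⟩)]
        with y hy
      have hsy : q y / |q y| = s k := hsgn_eq k h2 y hy
      have hqy0 : q y ≠ 0 := hne k h2 y hy
      have habs : |q y| ≠ 0 := abs_ne_zero.mpr hqy0
      have hsq : s k * q y = |q y| := by
        calc s k * q y = (q y * q y)/|q y| := by rw [← hsy]; ring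
          _ = (|q y| * |q y|)/|q y| := by rw [abs_mul_abs_self]
          _ = |q y| := by field_simp
      have hyz : 0 < y - z k := by have := hy.1; linarith
      have : s k * slope q (z k) y = |q y| / (y - z k) := by
        rw [slope_def_field, hzk0]
        rw [← hsq]; ring
      rw [this]
      positivity
    have hge : 0 ≤ s k * deriv q (z k) := ge_of_tendsto hslope' hnonneg
    rcases hs_pm k h2 with h | h
    · rw [h, one_mul] at hge ⊢
      exact (abs_of_nonneg hge).symm
    · rw [h] at hge ⊢
      rw [abs_of_nonpos (by linarith)]
      ring
  -- a.e. equality of the integrand with the constant-sign version on each piece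
  have hae : ∀ k ≤ N, (fun y => (q y / |q y|) * deriv (deriv q) y)
      =ᵐ[volume.restrict (Set.Ioc (z k) (z (k+1)))]
      (fun y => s k * deriv (deriv q) y) := by
    intro k hk
    have h1 : Set.Ioo (z k) (z (k+1)) =ᵐ[volume] Set.Ioc (z k) (z (k+1)) := Ioo_ae_eq_Ioc
    have h2 : ∀ᵐ y ∂(volume.restrict (Set.Ioo (z k) (z (k+1)))),
        (fun y => (q y / |q y|) * deriv (deriv q) y) y
          = (fun y => s k * deriv (deriv q) y) y := by
      refine (ae_restrict_iff' measurableSet_Ioo).mpr (Filter.Eventually.of_forall ?_)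
      intro y hy
      simp only
      rw [hsgn_eq k hk y hy]
    rwa [Measure.restrict_congr_set h1] at h2
  have hInt : ∀ k ≤ N, IntervalIntegrable
      (fun y => (q y / |q y|) * deriv (deriv q) y) volume (z k) (z (k+1)) := by
    intro k hk
    have hg : IntervalIntegrable (fun y => s k * deriv (deriv q) y) volume
        (z k) (z (k+1)) := (continuous_const.mul hD2c).intervalIntegrable _ _
    rw [intervalIntegrable_iff_integrableOn_Ioc_of_le (hstep k hk).le] at hg ⊢
    exact hg.congr (hae k hk).symm
  have hEval : ∀ k ≤ N, ∫ y in (z k)..(z (k+1)), (q y / |q y|) * deriv (deriv q) y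
      = s k * (deriv q (z (k+1)) - deriv q (z k)) := by
    intro k hk
    rw [intervalIntegral.integral_of_le (hstep k hk).le]
    rw [integral_congr_ae (hae k hk)]
    rw [← intervalIntegral.integral_of_le (hstep k hk).le]
    rw [intervalIntegral.integral_const_mul]
    congr 1
    exact intervalIntegral.integral_deriv_eq_sub (fun x _ => hDd x)
      (hD2c.intervalIntegrable _ _)
  have htotal : ∫ y in Set.Icc (-(1:ℝ)/2) (1/2), (q y / |q y|) * deriv (deriv q) y
      = ∑ k ∈ Finset.range (N+1), s k * (deriv q (z (k+1)) - deriv q (z k)) := by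
    rw [MeasureTheory.integral_Icc_eq_integral_Ioc]
    rw [← intervalIntegral.integral_of_le (by norm_num : (-(1:ℝ)/2) ≤ 1/2)]
    rw [← hz0, ← hzlast]
    rw [← intervalIntegral.sum_integral_adjacent_intervals
      (fun k hk => hInt k (by omega))]
    exact Finset.sum_congr rfl fun k hk => hEval k (by
      have := Finset.mem_range.mp hk; omega)
  have key : ∀ n ≤ N, ∑ k ∈ Finset.range (n+1), s k * (deriv q (z (k+1)) - deriv q (z k))
      = s n * deriv q (z (n+1)) - s 0 * deriv q (z 0)
        - 2 * ∑ k ∈ Finset.range n, |deriv q (z (k+1))| := by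
    intro n
    induction n with
    | zero =>
      intro _
      rw [Finset.sum_range_one, Finset.sum_range_zero]
      ring
    | succ n ih =>
      intro hn
      rw [Finset.sum_range_succ, ih (by omega), Finset.sum_range_succ]
      have h1 : s (n+1) = -s n := halt n (by omega)
      have h2 : s (n+1) * deriv q (z (n+1)) = |deriv q (z (n+1))| := hF (n+1) (by omega) hn
      have h3 : s n * deriv q (z (n+1)) = -|deriv q (z (n+1))| := by
        rw [← h2, h1]; ring
      linear_combination h3 - h2
  -- endpoint signs agree
  have hs0 : s 0 = q (-(1:ℝ)/2) / |q (-(1:ℝ)/2)| := by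
    have hmm := hm_mem 0 (Nat.zero_le N)
    rw [hsk]
    apply aux_samesign q hqc
    intro t ht
    rw [Set.uIcc_of_ge (by rw [← hz0]; exact hmm.1.le)] at ht
    rcases eq_or_lt_of_le ht.1 with rfl | h
    · exact hqA0
    · exact hne 0 (Nat.zero_le N) t ⟨by rw [hz0]; exact h, lt_of_le_of_lt ht.2 hmm.2⟩
  have hsN : s N = q (1/2 : ℝ) / |q (1/2)| := by
    have hmm := hm_mem N le_rfl
    rw [hsk]
    apply aux_samesign q hqc
    intro t ht
    rw [Set.uIcc_of_le (by rw [← hzlast]; exact hmm.2.le)] at ht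
    rcases eq_or_lt_of_le ht.2 with h | h
    · rw [h]; exact hqB0
    · exact hne N le_rfl t ⟨lt_of_lt_of_le hmm.1 ht.1, by rw [hzlast]; exact h⟩
  have hsedge : s N * deriv q (z (N+1)) - s 0 * deriv q (z 0) = 0 := by
    rw [hz0, hzlast, hperD, hs0, hsN, hqB]
    ring
  have hsum2 : ∑ k ∈ Finset.range N, |deriv q (z (k+1))| = ∑ i, |deriv q (Y i)| := by
    rw [← Fin.sum_univ_eq_sum_range (fun k => |deriv q (z (k+1))|) N]
    apply Finset.sum_congr rfl
    intro i _
    congr 1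
    rw [hzmid (i.val+1) (by omega) (by omega)]
    norm_num
  rw [htotal, key N le_rfl, hsum2]
  linear_combination hsedge
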